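/- Let γ : [0,1] → ℂ be a closed polygonal path with n sides avoiding a point p ∈ ℂ, such that p does not lie on any of the lines containing the sides. Then the absolute value of the winding number of γ around p is strictly less than n/2. -/

import Mathlib

open Complex intervalIntegral

lemma int_c (c : ℂ) (hc : c.im ≠ 0) :
    (∫ t in (0:ℝ)..1, 1 / (c + t)) = Complex.log (c + 1) - Complex.log c := by
  have key : ∀ t : ℝ, HasDerivAt (fun s : ℝ => Complex.log (c + s)) (1 / (c + t)) t := by
    intro t
    have hmem : c + (t : ℂ) ∈ Complex.slitPlane := by
      rw [Complex.mem_slitPlane_iff]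
      right; simpa using hc
    have h1 : HasDerivAt (fun z : ℂ => Complex.log (c + z)) ((c + t)⁻¹) (t : ℂ) := by
      simpa using ((hasDerivAt_id (t : ℂ)).const_add c).clog hmem
    simpa [one_div] using h1.comp_ofReal
  have hcont : ContinuousOn (fun t : ℝ => 1 / (c + t)) (Set.uIcc (0:ℝ) 1) := by
    apply ContinuousOn.div continuousOn_const
    · fun_prop
    · intro t _
      intro h
      apply hc
      have := congrArg Complex.im h
      simpa using this
  have := intervalIntegral.integral_eq_sub_of_hasDerivAt (fun t _ => key t)
    (hcont.intervalIntegrable)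
  simpa using this

lemma im_bound (c : ℂ) (hc : c.im ≠ 0) :
    |(Complex.log (c + 1) - Complex.log c).im| < Real.pi := by
  have h1 : (c + 1).im = c.im := by simp
  rw [Complex.sub_im, Complex.log_im, Complex.log_im]
  rcases hc.lt_or_gt with h | h
  · -- im < 0 : both args in (-π, 0)
    have a1 : Complex.arg (c+1) < 0 := Complex.arg_neg_iff.2 (by rw [h1]; exact h)
    have a2 : Complex.arg c < 0 := Complex.arg_neg_iff.2 h
    have b1 := Complex.neg_pi_lt_arg (c+1)
    have b2 := Complex.neg_pi_lt_arg c
    rw [abs_lt]; constructor <;> linarith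
  · have a1 : 0 ≤ Complex.arg (c+1) := le_of_not_gt fun hh => absurd (Complex.arg_neg_iff.1 hh) (by rw [h1]; linarith)
    have a2 : 0 ≤ Complex.arg c := le_of_not_gt fun hh => absurd (Complex.arg_neg_iff.1 hh) (by linarith)
    have b1 : Complex.arg (c+1) < Real.pi := Complex.arg_lt_pi_iff.2 (Or.inr (by rw [h1]; exact h.ne'))
    have b2 : Complex.arg c < Real.pi := Complex.arg_lt_pi_iff.2 (Or.inr h.ne')
    rw [abs_lt]; constructor <;> linarith

lemma col_of (p u v : ℂ) (h : ((u - p) / (v - u)).im = 0) :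
    Collinear ℝ ({p, u, v} : Set ℂ) := by
  by_cases hb : v - u = 0
  · have huv : v = u := by rwa [sub_eq_zero] at hb
    rw [huv]
    have : ({p, u, u} : Set ℂ) = {p, u} := by
      ext x; simp only [Set.mem_insert_iff, Set.mem_singleton_iff]; tauto
    rw [this]
    exact collinear_pair ℝ p u
  · set r := ((u - p) / (v - u)).re with hr
    have hc : (u - p) / (v - u) = (r : ℂ) := by
      apply Complex.ext <;> simp [hr, h]
    have hu : u - p = (r : ℂ) * (v - u) := by
      field_simp at hc; linear_combination hc
    rw [collinear_iff_of_mem (Set.mem_insert p _)]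
    refine ⟨v - u, ?_⟩
    intro x hx
    simp only [Set.mem_insert_iff, Set.mem_singleton_iff] at hx
    rcases hx with rfl | rfl | rfl
    · exact ⟨0, by simp⟩
    · refine ⟨r, ?_⟩
      rw [vadd_eq_add, Complex.real_smul]
      linear_combination hu
    · refine ⟨r + 1, ?_⟩
      rw [vadd_eq_add, Complex.real_smul]
      push_cast
      linear_combination hu

/-- The winding number around `p` of a closed polygonal path with `n` sides, where `p`
does not lie on any of the lines containing the sides, has absolute value `< n/2`. -/
theorem stmt_8 (n : ℕ) [NeZero n] (w : Fin n → ℂ) (p : ℂ)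
    (hdist : ∀ j, w j ≠ w (j + 1))
    (hcol : ∀ j, ¬ Collinear ℝ ({p, w j, w (j + 1)} : Set ℂ)) :
    ‖((1 / (2 * Real.pi * Complex.I)) *
      ∑ j : Fin n, ∫ t in (0:ℝ)..1,
        (w (j + 1) - w j) / ((w j + (t : ℂ) * (w (j + 1) - w j)) - p))‖ < n / 2 := by
  have hpi := Real.pi_pos
  set b : Fin n → ℂ := fun j => w (j + 1) - w j with hbdef
  set c : Fin n → ℂ := fun j => (w j - p) / b j with hcdef
  have hb : ∀ j, b j ≠ 0 := fun j => sub_ne_zero.2 (hdist j).symm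
  have hcim : ∀ j, (c j).im ≠ 0 := by
    intro j hj
    exact hcol j (col_of p (w j) (w (j + 1)) hj)
  -- each integral equals log (c j + 1) - log (c j)
  have hint : ∀ j, (∫ t in (0:ℝ)..1,
      (w (j + 1) - w j) / ((w j + (t : ℂ) * (w (j + 1) - w j)) - p))
      = Complex.log (c j + 1) - Complex.log (c j) := by
    intro j
    rw [← int_c (c j) (hcim j)]
    apply intervalIntegral.integral_congr
    intro t _
    have h1 : b j * c j = w j - p := by
      rw [hcdef, mul_comm]
      exact div_mul_cancel₀ _ (hb j)
    have he : (w j + (t : ℂ) * (w (j + 1) - w j)) - p = b j * (c j + t) := by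
      rw [mul_add, h1]
      simp only [hbdef]
      ring
    show (w (j + 1) - w j) / ((w j + (t : ℂ) * (w (j + 1) - w j)) - p) = 1 / (c j + t)
    rw [he]
    show b j / (b j * (c j + t)) = 1 / (c j + t)
    rw [div_mul_cancel_left₀ (hb j), one_div]
  simp_rw [hint]
  set S : ℂ := ∑ j : Fin n, (Complex.log (c j + 1) - Complex.log (c j)) with hSdef
  -- nonvanishing of endpoints
  have ha : ∀ j, w j - p ≠ 0 := by
    intro j hj
    apply hcim j
    simp [hcdef, hj]
  -- real part telescopes to zero
  have hre : S.re = 0 := by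
    have hc1 : ∀ j, c j + 1 = (w (j + 1) - p) / b j := by
      intro j
      rw [hcdef]
      rw [div_add_one (hb j)]
      congr 1
      simp only [hbdef]
      ring
    have hterm : ∀ j, (Complex.log (c j + 1) - Complex.log (c j)).re
        = Real.log ‖w (j + 1) - p‖ - Real.log ‖w j - p‖ := by
      intro j
      rw [Complex.sub_re, Complex.log_re, Complex.log_re, hc1 j, hcdef]
      simp only [norm_div]
      rw [Real.log_div (norm_ne_zero_iff.mpr (ha (j+1))) (norm_ne_zero_iff.mpr (hb j)),
        Real.log_div (norm_ne_zero_iff.mpr (ha j)) (norm_ne_zero_iff.mpr (hb j))]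
      ring
    rw [hSdef, Complex.re_sum]
    rw [Finset.sum_congr rfl fun j _ => hterm j, Finset.sum_sub_distrib]
    rw [sub_eq_zero]
    exact Fintype.sum_equiv (Equiv.addRight (1 : Fin n)) _ _ (fun j => rfl)
  -- imaginary part bound
  have him : |S.im| < n * Real.pi := by
    have h0 : 0 < n := Nat.pos_of_ne_zero (NeZero.ne n)
    haveI : Nonempty (Fin n) := Fin.pos_iff_nonempty.mp h0
    calc |S.im| ≤ ∑ j : Fin n, |(Complex.log (c j + 1) - Complex.log (c j)).im| := by
          rw [hSdef, Complex.im_sum]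
          exact Finset.abs_sum_le_sum_abs _ _
      _ < ∑ _j : Fin n, Real.pi :=
          Finset.sum_lt_sum_of_nonempty Finset.univ_nonempty
            (fun j _ => im_bound (c j) (hcim j))
      _ = n * Real.pi := by simp [mul_comm]
  -- put it together
  have habsS : ‖S‖ = |S.im| := by
    have : S = (S.im : ℂ) * Complex.I := by
      apply Complex.ext <;> simp [hre]
    rw [this]
    simp
  rw [norm_mul, habsS]
  have habs1 : ‖(1 / (2 * (Real.pi : ℂ) * Complex.I))‖ = 1 / (2 * Real.pi) := by
    simp [norm_div, abs_of_pos hpi]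
  rw [habs1]
  rw [div_mul_eq_mul_div, one_mul, div_lt_div_iff₀ (by linarith) (by norm_num)]
  calc |S.im| * 2 < (n * Real.pi) * 2 := by linarith
    _ = n * (2 * Real.pi) := by ring
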